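/- For any sequence (ψ_k) in a Hilbert space H, dom(S) ⊆ dom(C), where S is the frame operator and C the analysis operator. -/

import Mathlib

open Filter Topology
open scoped ComplexInnerProductSpace

/-- For any sequence `(ψ k)` in a Hilbert space `H`, `dom S ⊆ dom C`: if the series
`∑ ⟨f, ψ k⟩ ψ k` converges in `H`, then the sequence `(⟨f, ψ k⟩)` belongs to `ℓ²`. -/
theorem stmt1 {H : Type*} [NormedAddCommGroup H] [InnerProductSpace ℂ H] [CompleteSpace H]
    (ψ : ℕ → H) (f : H)
    (hf : ∃ s : H, Tendsto (fun n => ∑ k ∈ Finset.range n, ⟪ψ k, f⟫ • ψ k) atTop (𝓝 s)) :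
    Memℓp (fun k => ⟪ψ k, f⟫) 2 := by
  obtain ⟨s, hs⟩ := hf
  set c : ℕ → ℂ := fun k => ⟪ψ k, f⟫ with hc
  have h1 : Tendsto (fun n => ⟪(∑ k ∈ Finset.range n, c k • ψ k), f⟫) atTop (𝓝 ⟪s, f⟫) :=
    hs.inner tendsto_const_nhds
  have h2 : ∀ n, Complex.re ⟪(∑ k ∈ Finset.range n, c k • ψ k), f⟫
      = ∑ k ∈ Finset.range n, ‖c k‖ ^ 2 := by
    intro n
    rw [sum_inner, Complex.re_sum]
    refine Finset.sum_congr rfl fun k _ => ?_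
    rw [inner_smul_left]
    simp [← hc, RCLike.conj_mul, ← Complex.ofReal_pow]
    change (c k).re * (c k).re + (c k).im * (c k).im = _
    rw [Complex.sq_norm, Complex.normSq_apply]
  have h3 : Tendsto (fun n => ∑ k ∈ Finset.range n, ‖c k‖ ^ 2) atTop
      (𝓝 (Complex.re ⟪s, f⟫)) := by
    have := (Complex.continuous_re.tendsto _).comp h1
    simpa only [Function.comp_def, h2] using this
  have hsum : Summable fun k => ‖c k‖ ^ 2 := by
    apply summable_of_sum_range_le (fun k => sq_nonneg _)
    intro n
    have hmono : Monotone (fun n => ∑ k ∈ Finset.range n, ‖c k‖ ^ 2) := by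
      intro a b hab
      exact Finset.sum_le_sum_of_subset_of_nonneg (Finset.range_subset_range.2 hab)
        (fun k _ _ => sq_nonneg _)
    exact hmono.ge_of_tendsto h3 n
  apply memℓp_gen
  have ht : ((2 : ENNReal)).toReal = (2 : ℝ) := by norm_num
  rw [ht]
  convert hsum using 2 with k
  norm_num
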